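/- Let n₁, n₂, n₃, n₄ ∈ ℕ with (n₁,n₂,n₃,n₄) ≠ (0,0,0,0), and let f : (0,∞) → ℝ be the iterated Mellin convolution f = φ_{a₁,b₁} ⋁ ⋯ ⋁ φ_{a_{n₁},b_{n₁}} ⋁ ϕ_{a'₁,c₁,d₁} ⋁ ⋯ ⋁ ϕ_{a'_{n₂},c_{n₂},d_{n₂}} ⋁ ψ_{a''₁,o₁,r₁} ⋁ ⋯ ⋁ ψ_{a''_{n₃},o_{n₃},r_{n₃}} ⋁ η_{a'''₁,v₁,w₁} ⋁ ⋯ ⋁ η_{a'''_{n₄},v_{n₄},w_{n₄}} (empty groups of factors are omitted), where the parameters satisfy a_j > 0, b_j ≥ 0 for j = 1,…,n₁; a'_j > 0, c_j ≥ 0, d_j ≥ c_j + 1 for j = 1,…,n₂; a''_j > 0, r_j > 0, o_j ≥ 0 for j = 1,…,n₃; a'''_j > 0, v_j > 0, w_j ≥ v_j + 1 for j = 1,…,n₄. If it is not the case that (n₁ = n₃ = n₄ = 0 and n₂ ≥ 1), and not the case that (n₁ = n₂ = n₃ = 0 and n₄ ≥ 1), then f(t) > 0 for every t > 0. -/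

import Mathlib

open MeasureTheory Set

/-- `φ_{a,b}(t) = (1/a) t^{b/a} exp(−t^{1/a})`. -/
noncomputable def phiElem (a b : ℝ) : ℝ → ℝ :=
  fun t => (1 / a) * t ^ (b / a) * Real.exp (-(t ^ (1 / a)))

/-- `ϕ_{a,b,c}(t) = t^{b/a} (1 − t^{1/a})^{c−b−1} / (a Γ(c−b))` for `0 < t < 1`, else `0`. -/
noncomputable def phi2Elem (a b c : ℝ) : ℝ → ℝ :=
  fun t => if t < 1 then
    (1 / (a * Real.Gamma (c - b))) * t ^ (b / a) * (1 - t ^ (1 / a)) ^ (c - b - 1)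
  else 0

/-- `ψ_{a,b,c}(t) = (Γ(b+c)/a) t^{b/a} (1 + t^{1/a})^{−b−c}`. -/
noncomputable def psiElem (a b c : ℝ) : ℝ → ℝ :=
  fun t => (Real.Gamma (b + c) / a) * t ^ (b / a) * (1 + t ^ (1 / a)) ^ (-b - c)

/-- `η_{a,b,c}(t) = t^{(1−c)/a} (t^{1/a} − 1)^{c−b−1} / (a Γ(c−b))` for `t > 1`, else `0`. -/
noncomputable def etaElem (a b c : ℝ) : ℝ → ℝ :=
  fun t => if 1 < t then
    (1 / (a * Real.Gamma (c - b))) * t ^ ((1 - c) / a) * (t ^ (1 / a) - 1) ^ (c - b - 1)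
  else 0

/-- Mellin convolution of two functions on `(0, ∞)`. -/
noncomputable def mellinConv (g₁ g₂ : ℝ → ℝ) : ℝ → ℝ :=
  fun t => ∫ τ in Set.Ioi (0 : ℝ), g₁ (t / τ) * g₂ τ / τ

/-- Iterated Mellin convolution of a (nonempty) list of functions, obtained by
folding the binary Mellin convolution; the value on the empty list is junk. -/
noncomputable def mellinConvList : List (ℝ → ℝ) → ℝ → ℝ
  | [] => fun _ => 0
  | g :: gs => gs.foldl mellinConv g

namespace MellinAux

inductive Kind | low | high | full
deriving DecidableEq

def Kind.set : Kind → Set ℝ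
  | .low => Ioo 0 1
  | .high => Ioi 1
  | .full => Ioi 0

def Kind.mul : Kind → Kind → Kind
  | .low, .low => .low
  | .high, .high => .high
  | _, _ => .full

def Kind.lo : Kind → Bool | .low => true | .full => true | .high => false
def Kind.hi : Kind → Bool | .high => true | .full => true | .low => false

lemma Kind.mul_lo (k₁ k₂ : Kind) : (k₁.mul k₂).lo = (k₁.lo || k₂.lo) := by
  cases k₁ <;> cases k₂ <;> rfl

lemma Kind.mul_hi (k₁ k₂ : Kind) : (k₁.mul k₂).hi = (k₁.hi || k₂.hi) := by
  cases k₁ <;> cases k₂ <;> rfl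

lemma Kind.full_of (k : Kind) (h1 : k.lo = true) (h2 : k.hi = true) : k = .full := by
  cases k <;> simp_all [Kind.lo, Kind.hi]

lemma Kind.set_open (k : Kind) : IsOpen k.set := by
  cases k <;> simp [Kind.set, isOpen_Ioo, isOpen_Ioi]

lemma Kind.set_subset (k : Kind) : k.set ⊆ Ioi 0 := by
  cases k <;> intro x hx
  · exact hx.1
  · exact lt_trans zero_lt_one (show (1:ℝ) < x from hx)
  · exact hx

lemma Kind.mem_mul {k₁ k₂ : Kind} {t : ℝ} (h : t ∈ (k₁.mul k₂).set) :
    ∃ x y : ℝ, x ∈ k₁.set ∧ y ∈ k₂.set ∧ x * y = t := by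
  have hsq : ∀ u : ℝ, 0 < u → Real.sqrt u * Real.sqrt u = u := fun u hu => Real.mul_self_sqrt hu.le
  cases k₁ <;> cases k₂ <;> simp only [Kind.mul, Kind.set, mem_Ioo, mem_Ioi] at h ⊢
  · -- low low : t ∈ Ioo 0 1
    exact ⟨Real.sqrt t, Real.sqrt t,
      ⟨Real.sqrt_pos.2 h.1, by nlinarith [Real.sq_sqrt h.1.le, Real.sqrt_nonneg t, hsq t h.1]⟩,
      ⟨Real.sqrt_pos.2 h.1, by nlinarith [Real.sq_sqrt h.1.le, Real.sqrt_nonneg t, hsq t h.1]⟩,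
      hsq t h.1⟩
  · -- low high : full, t > 0
    refine ⟨t / (max 1 t + 1), max 1 t + 1, ⟨?_, ?_⟩, ?_, ?_⟩
    · positivity
    · rw [div_lt_one (by positivity)]
      calc t ≤ max 1 t := le_max_right _ _
        _ < max 1 t + 1 := by linarith
    · have := le_max_left (1:ℝ) t; linarith
    · field_simp
  · -- low full
    exact ⟨1/2, 2*t, ⟨by norm_num, by norm_num⟩, by linarith, by ring⟩
  · -- high low
    refine ⟨max 1 t + 1, t / (max 1 t + 1), ?_, ⟨?_, ?_⟩, ?_⟩
    · have := le_max_left (1:ℝ) t; linarith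
    · positivity
    · rw [div_lt_one (by positivity)]
      calc t ≤ max 1 t := le_max_right _ _
        _ < max 1 t + 1 := by linarith
    · rw [mul_comm]; field_simp
  · -- high high
    have h1 : (1:ℝ) < Real.sqrt t := by
      have := Real.lt_sqrt (x := 1) (y := t) zero_le_one
      simpa using this.2 (by simpa using h)
    exact ⟨Real.sqrt t, Real.sqrt t, h1, h1, hsq t (lt_trans zero_lt_one h)⟩
  · -- high full
    exact ⟨2, t/2, by norm_num, by positivity, by ring⟩
  · -- full low
    exact ⟨2*t, 1/2, by linarith, ⟨by norm_num, by norm_num⟩, by ring⟩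
  · -- full high
    exact ⟨t/2, 2, by positivity, by norm_num, by ring⟩
  · -- full full
    exact ⟨t, 1, h, by norm_num, by ring⟩

lemma Kind.foldl_lo (L : List Kind) (k : Kind) :
    (L.foldl Kind.mul k).lo = (k.lo || L.any Kind.lo) := by
  induction L generalizing k with
  | nil => simp
  | cons k' L ih => simp [List.foldl_cons, ih, Kind.mul_lo, Bool.or_assoc]

lemma Kind.foldl_hi (L : List Kind) (k : Kind) :
    (L.foldl Kind.mul k).hi = (k.hi || L.any Kind.hi) := by
  induction L generalizing k with
  | nil => simp
  | cons k' L ih => simp [List.foldl_cons, ih, Kind.mul_hi, Bool.or_assoc]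



lemma kernel_le {g₁ g₂ : ℝ → ℝ} {C t τ e₁ e₂ : ℝ} (hC : 0 ≤ C)
    (hg₂ : ∀ x, 0 < x → 0 ≤ g₂ x)
    (b₁ : ∀ x, 0 < x → g₁ x ≤ C * x ^ (-e₁)) (b₂ : ∀ x, 0 < x → g₂ x ≤ C * x ^ (-e₂))
    (ht : 0 < t) (hτ : 0 < τ) :
    g₁ (t / τ) * g₂ τ / τ ≤ (C * C) * t ^ (-e₁) * τ ^ (e₁ - e₂ - 1) := by
  have hx : 0 < t / τ := div_pos ht hτ
  have h1 : g₁ (t / τ) * g₂ τ / τ ≤ (C * (t/τ) ^ (-e₁)) * (C * τ ^ (-e₂)) / τ :=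
    div_le_div_of_nonneg_right
      (mul_le_mul (b₁ _ hx) (b₂ _ hτ) (hg₂ _ hτ) (by positivity)) hτ.le
  refine h1.trans_eq ?_
  rw [Real.div_rpow ht.le hτ.le]
  rw [div_eq_mul_inv _ τ, ← Real.rpow_neg_one τ]
  have h2 : τ ^ e₁ * τ ^ (-e₂) * τ ^ (-1 : ℝ) = τ ^ (e₁ - e₂ - 1) := by
    rw [← Real.rpow_add hτ, ← Real.rpow_add hτ]; ring_nf
  have h3 : (τ ^ (-e₁ : ℝ))⁻¹ = τ ^ (e₁ : ℝ) := by
    rw [Real.rpow_neg hτ.le, inv_inv]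
  calc C * (t ^ (-e₁) / τ ^ (-e₁)) * (C * τ ^ (-e₂)) * τ ^ (-1:ℝ)
      = (C * C) * t ^ (-e₁) * (τ ^ e₁ * τ ^ (-e₂) * τ ^ (-1:ℝ)) := by
        rw [div_eq_mul_inv, h3]; ring
    _ = (C * C) * t ^ (-e₁) * τ ^ (e₁ - e₂ - 1) := by rw [h2]


variable {g₁ g₂ : ℝ → ℝ} {C p q t : ℝ}


lemma conv_integrable_and_bound (m₁ : Measurable g₁) (m₂ : Measurable g₂)
    (hg₁ : ∀ x, 0 < x → 0 ≤ g₁ x) (hg₂ : ∀ x, 0 < x → 0 ≤ g₂ x)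
    (hp : 0 < p) (hpq : p < q) (hC : 0 ≤ C)
    (b₁p : ∀ x, 0 < x → g₁ x ≤ C * x ^ (-p)) (b₁q : ∀ x, 0 < x → g₁ x ≤ C * x ^ (-q))
    (b₂p : ∀ x, 0 < x → g₂ x ≤ C * x ^ (-p)) (b₂q : ∀ x, 0 < x → g₂ x ≤ C * x ^ (-q))
    (ht : 0 < t) :
    IntegrableOn (fun τ => g₁ (t / τ) * g₂ τ / τ) (Ioi 0) ∧
    ∫ τ in Ioi 0, g₁ (t / τ) * g₂ τ / τ ≤
      (C * C) * t ^ (-q) * (min 1 t) ^ (q - p) / (q - p)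
      + (C * C) * min (t ^ (-p)) (t ^ (-q)) * Real.log (max 1 t / min 1 t)
      + (C * C) * t ^ (-p) * (max 1 t) ^ (p - q) / (q - p) := by
  set F : ℝ → ℝ := fun τ => g₁ (t / τ) * g₂ τ / τ with hF
  set s : ℝ := min 1 t
  set S : ℝ := max 1 t
  have h0s : 0 < s := lt_min one_pos ht
  have hsS : s ≤ S := (min_le_left _ _).trans (le_max_left _ _)
  have h0S : 0 < S := h0s.trans_le hsS
  have hmF : Measurable F := ((m₁.comp (measurable_const.div measurable_id)).mul m₂).div
    measurable_id
  have hFnn : ∀ τ, 0 < τ → 0 ≤ F τ := fun τ hτ => by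
    have := hg₁ (t/τ) (div_pos ht hτ); have := hg₂ τ hτ; positivity
  -- the three dominating functions
  set K : ℝ := (C * C) * min (t ^ (-p)) (t ^ (-q)) with hK
  have hKnn : 0 ≤ K := by positivity
  set D₁ : ℝ → ℝ := fun τ => ((C * C) * t ^ (-q)) * τ ^ (q - p - 1) with hD₁
  set D₂ : ℝ → ℝ := fun τ => K * τ⁻¹ with hD₂
  set D₃ : ℝ → ℝ := fun τ => ((C * C) * t ^ (-p)) * τ ^ (p - q - 1) with hD₃
  -- pointwise bounds on the pieces
  have hb₁ : ∀ τ ∈ Ioc (0:ℝ) s, F τ ≤ D₁ τ := fun τ hτ =>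
    kernel_le hC hg₂ b₁q b₂p ht hτ.1
  have hb₂ : ∀ τ ∈ Ioc s S, F τ ≤ D₂ τ := by
    intro τ hτ
    have hτ0 : 0 < τ := h0s.trans hτ.1
    have e1 : F τ ≤ (C*C) * t ^ (-p) * τ ^ (p - p - 1) :=
      kernel_le hC hg₂ b₁p b₂p ht hτ0
    have e2 : F τ ≤ (C*C) * t ^ (-q) * τ ^ (q - q - 1) :=
      kernel_le hC hg₂ b₁q b₂q ht hτ0
    have hτinv : τ ^ (p - p - 1) = τ⁻¹ := by
      rw [show p - p - 1 = (-1 : ℝ) by ring, Real.rpow_neg_one]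
    have hτinv' : τ ^ (q - q - 1) = τ⁻¹ := by
      rw [show q - q - 1 = (-1 : ℝ) by ring, Real.rpow_neg_one]
    rw [hτinv] at e1; rw [hτinv'] at e2
    rcases le_total (t ^ (-p)) (t ^ (-q)) with hle | hle
    · show F τ ≤ K * τ⁻¹
      rw [hK, min_eq_left hle]; exact e1
    · show F τ ≤ K * τ⁻¹
      rw [hK, min_eq_right hle]; exact e2
  have hb₃ : ∀ τ ∈ Ioi S, F τ ≤ D₃ τ := fun τ hτ =>
    kernel_le hC hg₂ b₁p b₂q ht (h0S.trans hτ)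
  -- integrability of the dominating functions
  have hi₁ : IntegrableOn D₁ (Ioc 0 s) := by
    refine Integrable.const_mul ?_ _
    exact (intervalIntegral.intervalIntegrable_rpow' (by linarith)).1
  have hi₂ : IntegrableOn D₂ (Ioc s S) := by
    refine Integrable.const_mul ?_ _
    have : ContinuousOn (fun τ : ℝ => τ⁻¹) (uIcc s S) := by
      apply continuousOn_id.inv₀
      intro x hx
      rw [uIcc_of_le hsS] at hx
      exact (h0s.trans_le hx.1).ne'
    exact this.intervalIntegrable.1
  have hi₃ : IntegrableOn D₃ (Ioi S) := by
    refine Integrable.const_mul ?_ _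
    exact integrableOn_Ioi_rpow_of_lt (by linarith) h0S
  -- integrability of F on the pieces
  have int₁ : IntegrableOn F (Ioc 0 s) := by
    refine Integrable.mono' hi₁ (hmF.aestronglyMeasurable.restrict) ?_
    refine (ae_restrict_iff' measurableSet_Ioc).2 (ae_of_all _ fun τ hτ => ?_)
    rw [Real.norm_of_nonneg (hFnn τ hτ.1)]; exact hb₁ τ hτ
  have int₂ : IntegrableOn F (Ioc s S) := by
    refine Integrable.mono' hi₂ (hmF.aestronglyMeasurable.restrict) ?_
    refine (ae_restrict_iff' measurableSet_Ioc).2 (ae_of_all _ fun τ hτ => ?_)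
    rw [Real.norm_of_nonneg (hFnn τ (h0s.trans hτ.1))]; exact hb₂ τ hτ
  have int₃ : IntegrableOn F (Ioi S) := by
    refine Integrable.mono' hi₃ (hmF.aestronglyMeasurable.restrict) ?_
    refine (ae_restrict_iff' measurableSet_Ioi).2 (ae_of_all _ fun τ hτ => ?_)
    rw [Real.norm_of_nonneg (hFnn τ (h0S.trans hτ))]; exact hb₃ τ hτ
  have hu1 : Ioc s S ∪ Ioi S = Ioi s := Ioc_union_Ioi_eq_Ioi hsS
  have hu2 : Ioc 0 s ∪ Ioi s = Ioi (0:ℝ) := Ioc_union_Ioi_eq_Ioi h0s.le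
  have intIs : IntegrableOn F (Ioi s) := by rw [← hu1]; exact int₂.union int₃
  have intF : IntegrableOn F (Ioi 0) := by rw [← hu2]; exact int₁.union intIs
  refine ⟨intF, ?_⟩
  -- split the integral
  have hdisj1 : Disjoint (Ioc s S) (Ioi S) := Ioc_disjoint_Ioi le_rfl
  have hdisj2 : Disjoint (Ioc 0 s) (Ioi s) := Ioc_disjoint_Ioi le_rfl
  have hsplit : ∫ τ in Ioi 0, F τ =
      (∫ τ in Ioc 0 s, F τ) + ((∫ τ in Ioc s S, F τ) + (∫ τ in Ioi S, F τ)) := by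
    rw [← setIntegral_union hdisj1 measurableSet_Ioi int₂ int₃, hu1,
      ← setIntegral_union hdisj2 measurableSet_Ioi int₁ intIs, hu2]
  rw [hsplit]
  -- bound the three pieces
  have hmono₁ : (∫ τ in Ioc 0 s, F τ) ≤ ∫ τ in Ioc 0 s, D₁ τ :=
    setIntegral_mono_on int₁ hi₁ measurableSet_Ioc hb₁
  have hmono₂ : (∫ τ in Ioc s S, F τ) ≤ ∫ τ in Ioc s S, D₂ τ :=
    setIntegral_mono_on int₂ hi₂ measurableSet_Ioc hb₂
  have hmono₃ : (∫ τ in Ioi S, F τ) ≤ ∫ τ in Ioi S, D₃ τ :=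
    setIntegral_mono_on int₃ hi₃ measurableSet_Ioi hb₃
  -- compute the three dominated integrals
  have hqp : (0:ℝ) < q - p := by linarith
  have hval₁ : (∫ τ in Ioc 0 s, D₁ τ) = (C * C) * t ^ (-q) * (s ^ (q - p) / (q - p)) := by
    rw [hD₁, integral_const_mul]
    congr 1
    rw [← intervalIntegral.integral_of_le h0s.le,
      integral_rpow (Or.inl (by linarith : (-1:ℝ) < q - p - 1))]
    rw [show q - p - 1 + 1 = q - p by ring, Real.zero_rpow hqp.ne']
    ring
  have hval₂ : (∫ τ in Ioc s S, D₂ τ) = K * Real.log (S / s) := by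
    rw [hD₂, integral_const_mul]
    congr 1
    rw [← intervalIntegral.integral_of_le hsS, integral_inv]
    rw [uIcc_of_le hsS]
    intro hmem
    exact absurd hmem.1 (not_le.2 h0s)
  have hval₃ : (∫ τ in Ioi S, D₃ τ) = (C * C) * t ^ (-p) * (S ^ (p - q) / (q - p)) := by
    rw [hD₃, integral_const_mul]
    congr 1
    rw [integral_Ioi_rpow_of_lt (by linarith) h0S]
    rw [show p - q - 1 + 1 = p - q by ring]
    have hne : p - q ≠ 0 := by linarith
    field_simp
    ring
  have hsum := add_le_add hmono₁ (add_le_add hmono₂ hmono₃)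
  rw [hval₁, hval₂, hval₃] at hsum
  refine hsum.trans_eq ?_
  rw [hK]
  ring


def Nice (k : Kind) (g : ℝ → ℝ) : Prop :=
  Measurable g ∧ (∀ x, 0 < x → 0 ≤ g x) ∧ (∀ x ∈ k.set, 0 < g x) ∧
  ∃ β : ℝ, 0 < β ∧ ∀ ε : ℝ, 0 < ε → ε < β → ∃ C : ℝ, 0 ≤ C ∧ ∀ x, 0 < x → g x ≤ C * x ^ (-ε)

theorem nice_mellinConv {k₁ k₂ : Kind} (h₁ : Nice k₁ g₁) (h₂ : Nice k₂ g₂) :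
    Nice (k₁.mul k₂) (mellinConv g₁ g₂) := by
  obtain ⟨m₁, nn₁, pos₁, β₁, hβ₁, env₁⟩ := h₁
  obtain ⟨m₂, nn₂, pos₂, β₂, hβ₂, env₂⟩ := h₂
  set β : ℝ := min β₁ β₂ with hβdef
  have hβ : 0 < β := lt_min hβ₁ hβ₂
  -- a uniform family of bounds: for every 0 < e < β there is a common constant
  have env : ∀ e, 0 < e → e < β → ∃ C, 0 ≤ C ∧
      (∀ x, 0 < x → g₁ x ≤ C * x ^ (-e)) ∧ (∀ x, 0 < x → g₂ x ≤ C * x ^ (-e)) := by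
    intro e he heβ
    obtain ⟨C₁, hC₁, hb₁⟩ := env₁ e he (heβ.trans_le (min_le_left _ _))
    obtain ⟨C₂, hC₂, hb₂⟩ := env₂ e he (heβ.trans_le (min_le_right _ _))
    refine ⟨max C₁ C₂, le_trans hC₁ (le_max_left _ _), fun x hx => ?_, fun x hx => ?_⟩
    · exact (hb₁ x hx).trans (mul_le_mul_of_nonneg_right (le_max_left _ _) (by positivity))
    · exact (hb₂ x hx).trans (mul_le_mul_of_nonneg_right (le_max_right _ _) (by positivity))
  -- measurability
  have hmconv : Measurable (mellinConv g₁ g₂) := by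
    have hj : StronglyMeasurable fun z : ℝ × ℝ => g₁ (z.1 / z.2) * g₂ z.2 / z.2 :=
      (((m₁.comp (measurable_fst.div measurable_snd)).mul
        (m₂.comp measurable_snd)).div measurable_snd).stronglyMeasurable
    exact (hj.integral_prod_right' (ν := volume.restrict (Ioi 0))).measurable
  -- integrability for every t > 0, with a fixed pair of exponents
  obtain ⟨C₀, hC₀, hb₀p, hb₀q⟩ := env (β/2) (by positivity) (by linarith)
  obtain ⟨C₀', hC₀', hb₀p', hb₀q'⟩ := env (3*β/4) (by positivity) (by linarith)
  set Cm : ℝ := max C₀ C₀' with hCm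
  have hCm0 : 0 ≤ Cm := le_trans hC₀ (le_max_left _ _)
  have hint : ∀ t, 0 < t → IntegrableOn (fun τ => g₁ (t / τ) * g₂ τ / τ) (Ioi 0) := by
    intro t ht
    refine (conv_integrable_and_bound m₁ m₂ nn₁ nn₂ (by positivity : (0:ℝ) < β/2)
      (by linarith : β/2 < 3*β/4) hCm0 (fun x hx => ?_) (fun x hx => ?_)
      (fun x hx => ?_) (fun x hx => ?_) ht).1
    · exact (hb₀p x hx).trans (mul_le_mul_of_nonneg_right (le_max_left _ _) (by positivity))
    · exact (hb₀p' x hx).trans (mul_le_mul_of_nonneg_right (le_max_right _ _) (by positivity))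
    · exact (hb₀q x hx).trans (mul_le_mul_of_nonneg_right (le_max_left _ _) (by positivity))
    · exact (hb₀q' x hx).trans (mul_le_mul_of_nonneg_right (le_max_right _ _) (by positivity))
  have hnn : ∀ t, 0 < t → 0 ≤ mellinConv g₁ g₂ t := by
    intro t ht
    refine setIntegral_nonneg measurableSet_Ioi fun τ hτ => ?_
    have hτ0 : (0:ℝ) < τ := hτ
    have := nn₁ (t/τ) (div_pos ht hτ0)
    have := nn₂ τ hτ0
    positivity
  refine ⟨hmconv, hnn, ?_, ?_⟩
  · -- positivity on the product set
    intro t htset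
    have ht : 0 < t := Kind.set_subset _ htset
    obtain ⟨x, y, hx, hy, hxy⟩ := Kind.mem_mul htset
    have hy0 : 0 < y := Kind.set_subset _ hy
    have hcont : ContinuousOn (fun τ : ℝ => t / τ) k₂.set :=
      continuousOn_const.div continuousOn_id (fun τ hτ => (Kind.set_subset _ hτ).ne')
    have hUopen : IsOpen (k₂.set ∩ (fun τ : ℝ => t / τ) ⁻¹' k₁.set) :=
      hcont.isOpen_inter_preimage (Kind.set_open k₂) (Kind.set_open k₁)
    have hyU : y ∈ k₂.set ∩ (fun τ : ℝ => t / τ) ⁻¹' k₁.set := by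
      refine ⟨hy, ?_⟩
      have hxv : t / y = x := by
        field_simp [← hxy, mul_comm]
        rw [← hxy, mul_comm]
      simpa [Set.mem_preimage, hxv] using hx
    obtain ⟨ε, hε, hball⟩ := Metric.isOpen_iff.1 hUopen y hyU
    rw [Real.ball_eq_Ioo] at hball
    have hnnae : 0 ≤ᵐ[volume.restrict (Ioi 0)] fun τ => g₁ (t / τ) * g₂ τ / τ :=
      (ae_restrict_iff' measurableSet_Ioi).2 (ae_of_all _ fun τ hτ => by
        have h1 := nn₁ (t / τ) (div_pos ht hτ)
        have h2 := nn₂ τ hτ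
        have : (0:ℝ) < τ := hτ
        positivity)
    refine (setIntegral_pos_iff_support_of_nonneg_ae hnnae (hint t ht)).2 ?_
    refine lt_of_lt_of_le ?_
      (measure_mono (?_ : Ioo (y - ε) (y + ε) ⊆
        Function.support (fun τ => g₁ (t / τ) * g₂ τ / τ) ∩ Ioi 0))
    · rw [Real.volume_Ioo]
      apply ENNReal.ofReal_pos.2
      linarith
    · intro τ hτ
      have hτU := hball hτ
      have hτ2 : τ ∈ k₂.set := hτU.1
      have hτ1 : t / τ ∈ k₁.set := hτU.2
      have hτ0 : 0 < τ := Kind.set_subset _ hτ2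
      refine ⟨Function.mem_support.2 (ne_of_gt ?_), hτ0⟩
      have h1 := pos₁ _ hτ1
      have h2 := pos₂ _ hτ2
      positivity
  · -- envelope bound for the convolution
    refine ⟨β, hβ, ?_⟩
    intro ε hε0 hεβ
    set p : ℝ := ε / 2 with hpdef
    set q : ℝ := (ε + β) / 2 with hqdef
    have hp0 : 0 < p := by positivity
    have hpε : p < ε := by rw [hpdef]; linarith
    have hεq : ε < q := by rw [hqdef]; linarith
    have hpq : p < q := hpε.trans hεq
    have hqβ : q < β := by rw [hqdef]; linarith
    have hqp : (0:ℝ) < q - p := by linarith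
    have hep : (0:ℝ) < ε - p := by linarith
    have hqe2 : (0:ℝ) < q - ε := by linarith
    obtain ⟨Cp, hCp0, hbp1, hbp2⟩ := env p hp0 (by linarith)
    obtain ⟨Cq, hCq0, hbq1, hbq2⟩ := env q (by positivity) hqβ
    set C : ℝ := max Cp Cq with hCdef
    have hC0 : 0 ≤ C := le_trans hCp0 (le_max_left _ _)
    have b1p : ∀ x, 0 < x → g₁ x ≤ C * x ^ (-p) := fun x hx =>
      (hbp1 x hx).trans (mul_le_mul_of_nonneg_right (le_max_left _ _) (Real.rpow_nonneg hx.le _))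
    have b2p : ∀ x, 0 < x → g₂ x ≤ C * x ^ (-p) := fun x hx =>
      (hbp2 x hx).trans (mul_le_mul_of_nonneg_right (le_max_left _ _) (Real.rpow_nonneg hx.le _))
    have b1q : ∀ x, 0 < x → g₁ x ≤ C * x ^ (-q) := fun x hx =>
      (hbq1 x hx).trans (mul_le_mul_of_nonneg_right (le_max_right _ _) (Real.rpow_nonneg hx.le _))
    have b2q : ∀ x, 0 < x → g₂ x ≤ C * x ^ (-q) := fun x hx =>
      (hbq2 x hx).trans (mul_le_mul_of_nonneg_right (le_max_right _ _) (Real.rpow_nonneg hx.le _))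
    set M : ℝ := C * C with hMdef
    have hM0 : 0 ≤ M := by positivity
    have hsumnn : 0 ≤ 2 / (q - p) + 1 / (ε - p) + 1 / (q - ε) := by
      have h1 := div_pos two_pos hqp
      have h2 := div_pos one_pos hep
      have h3 := div_pos one_pos hqe2
      linarith
    refine ⟨M * (2 / (q - p) + 1 / (ε - p) + 1 / (q - ε)), mul_nonneg hM0 hsumnn, ?_⟩
    intro t ht
    have hbound := (conv_integrable_and_bound m₁ m₂ nn₁ nn₂ hp0 hpq hC0
      b1p b1q b2p b2q ht).2
    have hT0 : (0:ℝ) < t ^ (-ε) := Real.rpow_pos_of_pos ht _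
    refine hbound.trans ?_
    rw [← hMdef]
    rcases le_total t 1 with ht1 | ht1
    · -- t ≤ 1
      have hs : min 1 t = t := min_eq_right ht1
      have hS : max 1 t = 1 := max_eq_left ht1
      rw [hs, hS]
      have hpow1 : t ^ (-q) * t ^ (q - p) = t ^ (-p) := by
        rw [← Real.rpow_add ht]; ring_nf
      have hpe : t ^ (-p) ≤ t ^ (-ε) :=
        Real.rpow_le_rpow_of_exponent_ge ht ht1 (by linarith)
      have hlog0 : 0 ≤ Real.log (1 / t) :=
        Real.log_nonneg (by rw [le_div_iff₀ ht]; linarith)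
      have hlog : Real.log (1 / t) ≤ (1 / t) ^ (ε - p) / (ε - p) :=
        Real.log_le_rpow_div (by positivity) (by linarith)
      have hinv : (1 / t) ^ (ε - p) = t ^ (p - ε) := by
        rw [one_div, ← Real.rpow_neg_one t, ← Real.rpow_mul ht.le]
        congr 1; ring
      have hpow2 : t ^ (-p) * t ^ (p - ε) = t ^ (-ε) := by
        rw [← Real.rpow_add ht]; ring_nf
      have hterm1 : M * t ^ (-q) * t ^ (q - p) / (q - p) ≤ M * t ^ (-ε) / (q - p) := by
        rw [mul_assoc, hpow1]
        exact div_le_div_of_nonneg_right (mul_le_mul_of_nonneg_left hpe hM0) hqp.le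
      have hterm3 : M * t ^ (-p) * (1:ℝ) ^ (p - q) / (q - p) ≤ M * t ^ (-ε) / (q - p) := by
        rw [Real.one_rpow, mul_one]
        exact div_le_div_of_nonneg_right (mul_le_mul_of_nonneg_left hpe hM0) hqp.le
      have hterm2 : M * min (t ^ (-p)) (t ^ (-q)) * Real.log (1 / t)
          ≤ M * t ^ (-ε) / (ε - p) := by
        calc M * min (t ^ (-p)) (t ^ (-q)) * Real.log (1 / t)
            ≤ M * t ^ (-p) * ((1 / t) ^ (ε - p) / (ε - p)) := by
              apply mul_le_mul ?_ hlog hlog0 (mul_nonneg hM0 (Real.rpow_nonneg ht.le _))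
              exact mul_le_mul_of_nonneg_left (min_le_left _ _) hM0
          _ = M * (t ^ (-p) * t ^ (p - ε)) / (ε - p) := by rw [hinv]; ring
          _ = M * t ^ (-ε) / (ε - p) := by rw [hpow2]
      have hrest : 0 ≤ M * t ^ (-ε) / (q - ε) := div_nonneg (mul_nonneg hM0 hT0.le) hqe2.le
      have hgoal : M * (2 / (q - p) + 1 / (ε - p) + 1 / (q - ε)) * t ^ (-ε)
          = M * t ^ (-ε) / (q - p) + M * t ^ (-ε) / (ε - p)
            + M * t ^ (-ε) / (q - p) + M * t ^ (-ε) / (q - ε) := by ring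
      rw [hgoal]
      linarith
    · -- 1 ≤ t
      have hs : min 1 t = 1 := min_eq_left ht1
      have hS : max 1 t = t := max_eq_right ht1
      rw [hs, hS]
      have hqe : t ^ (-q) ≤ t ^ (-ε) :=
        Real.rpow_le_rpow_of_exponent_le ht1 (by linarith)
      have hpow1 : t ^ (-p) * t ^ (p - q) = t ^ (-q) := by
        rw [← Real.rpow_add ht]; ring_nf
      have hlog0 : 0 ≤ Real.log (t / 1) := by
        rw [div_one]; exact Real.log_nonneg ht1
      have hlog : Real.log (t / 1) ≤ t ^ (q - ε) / (q - ε) := by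
        rw [div_one]
        exact Real.log_le_rpow_div ht.le (by linarith)
      have hpow2 : t ^ (-q) * t ^ (q - ε) = t ^ (-ε) := by
        rw [← Real.rpow_add ht]; ring_nf
      have hterm1 : M * t ^ (-q) * (1:ℝ) ^ (q - p) / (q - p) ≤ M * t ^ (-ε) / (q - p) := by
        rw [Real.one_rpow, mul_one]
        exact div_le_div_of_nonneg_right (mul_le_mul_of_nonneg_left hqe hM0) hqp.le
      have hterm3 : M * t ^ (-p) * t ^ (p - q) / (q - p) ≤ M * t ^ (-ε) / (q - p) := by
        rw [mul_assoc, hpow1]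
        exact div_le_div_of_nonneg_right (mul_le_mul_of_nonneg_left hqe hM0) hqp.le
      have hterm2 : M * min (t ^ (-p)) (t ^ (-q)) * Real.log (t / 1)
          ≤ M * t ^ (-ε) / (q - ε) := by
        calc M * min (t ^ (-p)) (t ^ (-q)) * Real.log (t / 1)
            ≤ M * t ^ (-q) * (t ^ (q - ε) / (q - ε)) := by
              apply mul_le_mul ?_ hlog hlog0 (mul_nonneg hM0 (Real.rpow_nonneg ht.le _))
              exact mul_le_mul_of_nonneg_left (min_le_right _ _) hM0
          _ = M * (t ^ (-q) * t ^ (q - ε)) / (q - ε) := by ring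
          _ = M * t ^ (-ε) / (q - ε) := by rw [hpow2]
      have hrest : 0 ≤ M * t ^ (-ε) / (ε - p) := div_nonneg (mul_nonneg hM0 hT0.le) hep.le
      have hgoal : M * (2 / (q - p) + 1 / (ε - p) + 1 / (q - ε)) * t ^ (-ε)
          = M * t ^ (-ε) / (q - p) + M * t ^ (-ε) / (q - ε)
            + M * t ^ (-ε) / (q - p) + M * t ^ (-ε) / (ε - p) := by ring
      rw [hgoal]
      linarith

-- elementary lemmas fragment (appended to k5 before `end MellinAux`)


lemma rpow_mul_exp_neg_le (c : ℝ) (hc : 0 ≤ c) :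
    ∃ K : ℝ, 0 ≤ K ∧ ∀ u : ℝ, 0 < u → u ^ c * Real.exp (-u) ≤ K := by
  have hKdef : ∃ K : ℝ, K = ((Nat.ceil c).factorial : ℝ) := ⟨_, rfl⟩
  obtain ⟨K, hKdef⟩ := hKdef
  have hfact1 : (1:ℝ) ≤ K := by
    rw [hKdef]; exact_mod_cast Nat.one_le_iff_ne_zero.2 (Nat.factorial_ne_zero _)
  refine ⟨K, by linarith, fun u hu => ?_⟩
  rcases le_total u 1 with hu1 | hu1
  · have h1 : u ^ c ≤ 1 := Real.rpow_le_one hu.le hu1 hc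
    have h2 : Real.exp (-u) ≤ 1 := by
      rw [Real.exp_le_one_iff]; linarith
    calc u ^ c * Real.exp (-u) ≤ 1 * 1 :=
          mul_le_mul h1 h2 (Real.exp_nonneg _) zero_le_one
      _ ≤ K := by linarith
  · set n := Nat.ceil c with hn
    have h1 : u ^ c ≤ u ^ (n:ℝ) := Real.rpow_le_rpow_of_exponent_le hu1 (Nat.le_ceil c)
    have h2 : u ^ (n:ℝ) = u ^ n := Real.rpow_natCast u n
    have h3 : u ^ n ≤ K * Real.exp u := by
      rw [hKdef]
      have hsum := Real.sum_le_exp_of_nonneg (by linarith : (0:ℝ) ≤ u) (n+1)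
      have hterm : u ^ n / (n.factorial : ℝ) ≤ Real.exp u :=
        le_trans (Finset.single_le_sum (f := fun i => u ^ i / (i.factorial : ℝ))
          (fun i _ => by positivity) (Finset.self_mem_range_succ n)) hsum
      rw [div_le_iff₀ (by positivity)] at hterm
      linarith
    calc u ^ c * Real.exp (-u) ≤ u ^ (n:ℝ) * Real.exp (-u) :=
          mul_le_mul_of_nonneg_right h1 (Real.exp_nonneg _)
      _ = u ^ n * Real.exp (-u) := by rw [h2]
      _ ≤ (K * Real.exp u) * Real.exp (-u) :=
          mul_le_mul_of_nonneg_right h3 (Real.exp_nonneg _)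
      _ = K := by rw [mul_assoc, ← Real.exp_add]; simp

lemma nice_phiElem {a b : ℝ} (ha : 0 < a) (hb : 0 ≤ b) : Nice .full (phiElem a b) := by
  have hmeas : Measurable (phiElem a b) := by
    unfold phiElem
    fun_prop
  have hpos : ∀ x : ℝ, 0 < x → 0 < phiElem a b x := by
    intro x hx
    unfold phiElem
    have h1 : 0 < x ^ (b / a) := Real.rpow_pos_of_pos hx _
    have h2 : 0 < Real.exp (-(x ^ (1/a))) := Real.exp_pos _
    positivity
  refine ⟨hmeas, fun x hx => (hpos x hx).le, fun x hx => hpos x (Kind.set_subset _ hx), 1,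
    one_pos, ?_⟩
  intro ε hε0 hε1
  obtain ⟨K, hK0, hK⟩ := rpow_mul_exp_neg_le (b + a * ε) (by positivity)
  refine ⟨K / a, by positivity, ?_⟩
  intro x hx
  have hu : 0 < x ^ (1/a) := Real.rpow_pos_of_pos hx _
  have hKx := hK _ hu
  have hpow : (x ^ (1/a)) ^ (b + a * ε) = x ^ (b / a + ε) := by
    rw [← Real.rpow_mul hx.le]
    congr 1
    field_simp
  rw [hpow] at hKx
  have hsplit : x ^ (b / a) = x ^ (b / a + ε) * x ^ (-ε) := by
    rw [← Real.rpow_add hx]; ring_nf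
  unfold phiElem
  rw [hsplit]
  have hxe : 0 ≤ x ^ (-ε) := Real.rpow_nonneg hx.le _
  calc (1/a) * (x ^ (b/a + ε) * x ^ (-ε)) * Real.exp (-(x ^ (1/a)))
      = (1/a) * (x ^ (b/a + ε) * Real.exp (-(x ^ (1/a)))) * x ^ (-ε) := by ring
    _ ≤ (1/a) * K * x ^ (-ε) := by
        apply mul_le_mul_of_nonneg_right _ hxe
        apply mul_le_mul_of_nonneg_left hKx (by positivity)
    _ = K / a * x ^ (-ε) := by ring




lemma nice_psiElem {a b c : ℝ} (ha : 0 < a) (hb : 0 ≤ b) (hc : 0 < c) :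
    Nice .full (psiElem a b c) := by
  have hΓ : 0 < Real.Gamma (b + c) := Real.Gamma_pos_of_pos (by linarith)
  have hmeas : Measurable (psiElem a b c) := by
    unfold psiElem
    fun_prop
  have hpos : ∀ x : ℝ, 0 < x → 0 < psiElem a b c x := by
    intro x hx
    unfold psiElem
    have h1 : 0 < x ^ (b / a) := Real.rpow_pos_of_pos hx _
    have hbase : 0 < 1 + x ^ (1/a) := by
      have := Real.rpow_pos_of_pos hx (1/a); linarith
    have h2 : 0 < (1 + x ^ (1/a)) ^ (-b - c) := Real.rpow_pos_of_pos hbase _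
    positivity
  refine ⟨hmeas, fun x hx => (hpos x hx).le, fun x hx => hpos x (Kind.set_subset _ hx),
    c / a, by positivity, ?_⟩
  intro ε hε0 hεβ
  refine ⟨Real.Gamma (b + c) / a, by positivity, ?_⟩
  intro x hx
  unfold psiElem
  have hu0 : 0 < x ^ (1/a) := Real.rpow_pos_of_pos hx _
  have hbase : (0:ℝ) < 1 + x ^ (1/a) := by linarith
  rcases le_total x 1 with hx1 | hx1
  · have h1 : x ^ (b / a) ≤ 1 := Real.rpow_le_one hx.le hx1 (by positivity)
    have h2 : (1 + x ^ (1/a)) ^ (-b - c) ≤ 1 :=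
      Real.rpow_le_one_of_one_le_of_nonpos (by linarith) (by linarith)
    have h3 : (1:ℝ) ≤ x ^ (-ε) := by
      rw [← Real.rpow_zero x]
      exact Real.rpow_le_rpow_of_exponent_ge hx hx1 (by linarith)
    calc Real.Gamma (b + c) / a * x ^ (b/a) * (1 + x ^ (1/a)) ^ (-b - c)
        ≤ Real.Gamma (b + c) / a * 1 * 1 := by
          apply mul_le_mul _ h2 (Real.rpow_nonneg hbase.le _) (by positivity)
          exact mul_le_mul_of_nonneg_left h1 (by positivity)
      _ = Real.Gamma (b + c) / a := by ring
      _ ≤ Real.Gamma (b + c) / a * x ^ (-ε) :=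
          le_mul_of_one_le_right (by positivity) h3
  · have h2 : (1 + x ^ (1/a)) ^ (-b - c) ≤ (x ^ (1/a)) ^ (-b - c) :=
      Real.rpow_le_rpow_of_nonpos hu0 (by linarith) (by linarith)
    have h3 : (x ^ (1/a)) ^ (-b - c) = x ^ ((-b - c)/a) := by
      rw [← Real.rpow_mul hx.le]
      congr 1
      field_simp
    have h4 : x ^ (b/a) * x ^ ((-b - c)/a) = x ^ (-(c/a)) := by
      rw [← Real.rpow_add hx]
      congr 1
      field_simp
      try ring
    have h5 : x ^ (-(c/a)) ≤ x ^ (-ε) :=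
      Real.rpow_le_rpow_of_exponent_le hx1 (by linarith)
    calc Real.Gamma (b + c) / a * x ^ (b/a) * (1 + x ^ (1/a)) ^ (-b - c)
        ≤ Real.Gamma (b + c) / a * x ^ (b/a) * (x ^ (1/a)) ^ (-b - c) := by
          apply mul_le_mul_of_nonneg_left h2
          have := Real.rpow_nonneg hx.le (b/a); positivity
      _ = Real.Gamma (b + c) / a * (x ^ (b/a) * x ^ ((-b - c)/a)) := by rw [h3]; ring
      _ = Real.Gamma (b + c) / a * x ^ (-(c/a)) := by rw [h4]
      _ ≤ Real.Gamma (b + c) / a * x ^ (-ε) :=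
          mul_le_mul_of_nonneg_left h5 (by positivity)

lemma nice_phi2Elem {a b c : ℝ} (ha : 0 < a) (hb : 0 ≤ b) (hc : b + 1 ≤ c) :
    Nice .low (phi2Elem a b c) := by
  have hΓ : 0 < Real.Gamma (c - b) := Real.Gamma_pos_of_pos (by linarith)
  have hmeas : Measurable (phi2Elem a b c) := by
    unfold phi2Elem
    apply Measurable.ite (measurableSet_lt measurable_id measurable_const) _ measurable_const
    fun_prop
  have hnn : ∀ x : ℝ, 0 < x → 0 ≤ phi2Elem a b c x := by
    intro x hx
    unfold phi2Elem
    split_ifs with h1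
    · have hu1 : x ^ (1/a) ≤ 1 := Real.rpow_le_one hx.le h1.le (by positivity)
      have h2 : 0 ≤ (1 - x ^ (1/a)) ^ (c - b - 1) := Real.rpow_nonneg (by linarith) _
      have h3 : 0 ≤ x ^ (b/a) := Real.rpow_nonneg hx.le _
      positivity
    · exact le_refl 0
  have hposlow : ∀ x ∈ Kind.set .low, 0 < phi2Elem a b c x := by
    intro x hx
    have hx0 : (0:ℝ) < x := hx.1
    have hx1 : x < 1 := hx.2
    unfold phi2Elem
    rw [if_pos hx1]
    have hu : x ^ (1/a) < 1 := Real.rpow_lt_one hx0.le hx1 (by positivity)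
    have h2 : 0 < (1 - x ^ (1/a)) ^ (c - b - 1) := Real.rpow_pos_of_pos (by linarith) _
    have h3 : 0 < x ^ (b/a) := Real.rpow_pos_of_pos hx0 _
    positivity
  refine ⟨hmeas, hnn, hposlow, 1, one_pos, ?_⟩
  intro ε hε0 hε1
  refine ⟨1 / (a * Real.Gamma (c - b)), by positivity, ?_⟩
  intro x hx
  unfold phi2Elem
  have hxe : (0:ℝ) ≤ x ^ (-ε) := Real.rpow_nonneg hx.le _
  split_ifs with h1
  · have hu1 : x ^ (1/a) ≤ 1 := Real.rpow_le_one hx.le h1.le (by positivity)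
    have hu0 : 0 ≤ x ^ (1/a) := Real.rpow_nonneg hx.le _
    have hb1 : x ^ (b/a) ≤ 1 := Real.rpow_le_one hx.le h1.le (by positivity)
    have hb2 : (1 - x ^ (1/a)) ^ (c-b-1) ≤ 1 :=
      Real.rpow_le_one (by linarith) (by linarith) (by linarith)
    have h3 : (1:ℝ) ≤ x ^ (-ε) := by
      rw [← Real.rpow_zero x]
      exact Real.rpow_le_rpow_of_exponent_ge hx h1.le (by linarith)
    have hbb0 : 0 ≤ (1 - x ^ (1/a)) ^ (c-b-1) := Real.rpow_nonneg (by linarith) _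
    calc 1/(a * Real.Gamma (c-b)) * x ^ (b/a) * (1 - x ^ (1/a)) ^ (c-b-1)
        ≤ 1/(a * Real.Gamma (c-b)) * 1 * 1 := by
          apply mul_le_mul _ hb2 hbb0 (by positivity)
          exact mul_le_mul_of_nonneg_left hb1 (by positivity)
      _ = 1/(a * Real.Gamma (c-b)) := by ring
      _ ≤ 1/(a * Real.Gamma (c-b)) * x ^ (-ε) :=
          le_mul_of_one_le_right (by positivity) h3
  · exact mul_nonneg (by positivity) hxe

lemma nice_etaElem {a b c : ℝ} (ha : 0 < a) (hb : 0 < b) (hc : b + 1 ≤ c) :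
    Nice .high (etaElem a b c) := by
  have hΓ : 0 < Real.Gamma (c - b) := Real.Gamma_pos_of_pos (by linarith)
  have hmeas : Measurable (etaElem a b c) := by
    unfold etaElem
    apply Measurable.ite (measurableSet_lt measurable_const measurable_id) _ measurable_const
    fun_prop
  have hnn : ∀ x : ℝ, 0 < x → 0 ≤ etaElem a b c x := by
    intro x hx
    unfold etaElem
    split_ifs with h1
    · have hu1 : (1:ℝ) ≤ x ^ (1/a) := by
        rw [← Real.rpow_zero x]
        exact Real.rpow_le_rpow_of_exponent_le h1.le (by positivity)
      have h2 : 0 ≤ (x ^ (1/a) - 1) ^ (c - b - 1) := Real.rpow_nonneg (by linarith) _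
      have h3 : 0 ≤ x ^ ((1-c)/a) := Real.rpow_nonneg hx.le _
      positivity
    · exact le_refl 0
  have hposhigh : ∀ x ∈ Kind.set .high, 0 < etaElem a b c x := by
    intro x hx
    have hx1 : (1:ℝ) < x := hx
    have hx0 : (0:ℝ) < x := lt_trans one_pos hx1
    unfold etaElem
    rw [if_pos hx1]
    have hu : (1:ℝ) < x ^ (1/a) := by
      rw [← Real.rpow_zero x]
      exact Real.rpow_lt_rpow_of_exponent_lt hx1 (by positivity)
    have h2 : 0 < (x ^ (1/a) - 1) ^ (c - b - 1) := Real.rpow_pos_of_pos (by linarith) _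
    have h3 : 0 < x ^ ((1-c)/a) := Real.rpow_pos_of_pos hx0 _
    positivity
  refine ⟨hmeas, hnn, hposhigh, b / a, by positivity, ?_⟩
  intro ε hε0 hεβ
  refine ⟨1 / (a * Real.Gamma (c - b)), by positivity, ?_⟩
  intro x hx
  unfold etaElem
  have hxe : (0:ℝ) ≤ x ^ (-ε) := Real.rpow_nonneg hx.le _
  split_ifs with h1
  · have hu1 : (1:ℝ) ≤ x ^ (1/a) := by
      rw [← Real.rpow_zero x]
      exact Real.rpow_le_rpow_of_exponent_le h1.le (by positivity)
    have hkey : (x ^ (1/a) - 1) ^ (c-b-1) ≤ (x ^ (1/a)) ^ (c-b-1) :=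
      Real.rpow_le_rpow (by linarith) (by linarith) (by linarith)
    have h3 : (x ^ (1/a)) ^ (c-b-1) = x ^ ((c-b-1)/a) := by
      rw [← Real.rpow_mul hx.le]
      congr 1
      field_simp
    have h4 : x ^ ((1-c)/a) * x ^ ((c-b-1)/a) = x ^ (-(b/a)) := by
      rw [← Real.rpow_add hx]
      congr 1
      field_simp
      try ring
    have h5 : x ^ (-(b/a)) ≤ x ^ (-ε) :=
      Real.rpow_le_rpow_of_exponent_le h1.le (by linarith)
    have h6 : 0 ≤ x ^ ((1-c)/a) := Real.rpow_nonneg hx.le _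
    calc 1/(a * Real.Gamma (c-b)) * x ^ ((1-c)/a) * (x ^ (1/a) - 1) ^ (c-b-1)
        ≤ 1/(a * Real.Gamma (c-b)) * x ^ ((1-c)/a) * (x ^ (1/a)) ^ (c-b-1) := by
          apply mul_le_mul_of_nonneg_left hkey (by positivity)
      _ = 1/(a * Real.Gamma (c-b)) * (x ^ ((1-c)/a) * x ^ ((c-b-1)/a)) := by rw [h3]; ring
      _ = 1/(a * Real.Gamma (c-b)) * x ^ (-(b/a)) := by rw [h4]
      _ ≤ 1/(a * Real.Gamma (c-b)) * x ^ (-ε) :=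
          mul_le_mul_of_nonneg_left h5 (by positivity)
  · exact mul_nonneg (by positivity) hxe

lemma nice_foldl (L : List ((ℝ → ℝ) × Kind)) :
    ∀ (g : ℝ → ℝ) (k : Kind), Nice k g → (∀ p ∈ L, Nice p.2 p.1) →
    Nice (L.foldl (fun k p => k.mul p.2) k) ((L.map Prod.fst).foldl mellinConv g) := by
  induction L with
  | nil => intro g k hg _; simpa using hg
  | cons p L ih =>
    intro g k hg hL
    simp only [List.map_cons, List.foldl_cons]
    exact ih _ _ (nice_mellinConv hg (hL p List.mem_cons_self))
      (fun q hq => hL q (List.mem_cons_of_mem _ hq))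

end MellinAux

theorem stmt_7 (n₁ n₂ n₃ n₄ : ℕ)
    (a b : Fin n₁ → ℝ) (a' c d : Fin n₂ → ℝ)
    (a'' o r : Fin n₃ → ℝ) (a''' v w : Fin n₄ → ℝ)
    (ha : ∀ j, 0 < a j) (hb : ∀ j, 0 ≤ b j)
    (ha' : ∀ j, 0 < a' j) (hc : ∀ j, 0 ≤ c j) (hd : ∀ j, c j + 1 ≤ d j)
    (ha'' : ∀ j, 0 < a'' j) (hr : ∀ j, 0 < r j) (ho : ∀ j, 0 ≤ o j)
    (ha''' : ∀ j, 0 < a''' j) (hv : ∀ j, 0 < v j) (hw : ∀ j, v j + 1 ≤ w j)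
    (hne : ¬(n₁ = 0 ∧ n₂ = 0 ∧ n₃ = 0 ∧ n₄ = 0))
    (hcase₁ : ¬(n₁ = 0 ∧ n₃ = 0 ∧ n₄ = 0 ∧ 1 ≤ n₂))
    (hcase₂ : ¬(n₁ = 0 ∧ n₂ = 0 ∧ n₃ = 0 ∧ 1 ≤ n₄))
    (f : ℝ → ℝ)
    (hf : f = mellinConvList
      ((List.ofFn fun j => phiElem (a j) (b j)) ++
       (List.ofFn fun j => phi2Elem (a' j) (c j) (d j)) ++
       (List.ofFn fun j => psiElem (a'' j) (o j) (r j)) ++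
       (List.ofFn fun j => etaElem (a''' j) (v j) (w j)))) :
    ∀ t : ℝ, 0 < t → 0 < f t := by
  classical
  set T : List ((ℝ → ℝ) × MellinAux.Kind) :=
      (List.ofFn fun j => (phiElem (a j) (b j), MellinAux.Kind.full)) ++
      (List.ofFn fun j => (phi2Elem (a' j) (c j) (d j), MellinAux.Kind.low)) ++
      (List.ofFn fun j => (psiElem (a'' j) (o j) (r j), MellinAux.Kind.full)) ++
      (List.ofFn fun j => (etaElem (a''' j) (v j) (w j), MellinAux.Kind.high)) with hT
  have hTmap : T.map Prod.fst =
      ((List.ofFn fun j => phiElem (a j) (b j)) ++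
       (List.ofFn fun j => phi2Elem (a' j) (c j) (d j)) ++
       (List.ofFn fun j => psiElem (a'' j) (o j) (r j)) ++
       (List.ofFn fun j => etaElem (a''' j) (v j) (w j))) := by
    simp [hT, List.map_ofFn, Function.comp_def]
  have hTnice : ∀ p ∈ T, MellinAux.Nice p.2 p.1 := by
    intro p hp
    rw [hT] at hp
    simp only [List.mem_append, List.mem_ofFn] at hp
    rcases hp with (((⟨j, hj⟩ | ⟨j, hj⟩) | ⟨j, hj⟩) | ⟨j, hj⟩) <;> subst hj
    · exact MellinAux.nice_phiElem (ha j) (hb j)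
    · exact MellinAux.nice_phi2Elem (ha' j) (hc j) (hd j)
    · exact MellinAux.nice_psiElem (ha'' j) (ho j) (hr j)
    · exact MellinAux.nice_etaElem (ha''' j) (hv j) (hw j)
  -- lo and hi witnesses
  have hwit : (∃ p ∈ T, p.2.lo = true) ∧ (∃ p ∈ T, p.2.hi = true) := by
    have mem1 : ∀ h : 0 < n₁, (phiElem (a ⟨0,h⟩) (b ⟨0,h⟩), MellinAux.Kind.full) ∈ T := by
      intro h
      rw [hT]
      exact List.mem_append_left _ (List.mem_append_left _ (List.mem_append_left _
        (List.mem_ofFn.2 ⟨⟨0, h⟩, rfl⟩)))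
    have mem2 : ∀ h : 0 < n₂,
        (phi2Elem (a' ⟨0,h⟩) (c ⟨0,h⟩) (d ⟨0,h⟩), MellinAux.Kind.low) ∈ T := by
      intro h
      rw [hT]
      exact List.mem_append_left _ (List.mem_append_left _ (List.mem_append_right _
        (List.mem_ofFn.2 ⟨⟨0, h⟩, rfl⟩)))
    have mem3 : ∀ h : 0 < n₃,
        (psiElem (a'' ⟨0,h⟩) (o ⟨0,h⟩) (r ⟨0,h⟩), MellinAux.Kind.full) ∈ T := by
      intro h
      rw [hT]
      exact List.mem_append_left _ (List.mem_append_right _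
        (List.mem_ofFn.2 ⟨⟨0, h⟩, rfl⟩))
    have mem4 : ∀ h : 0 < n₄,
        (etaElem (a''' ⟨0,h⟩) (v ⟨0,h⟩) (w ⟨0,h⟩), MellinAux.Kind.high) ∈ T := by
      intro h
      rw [hT]
      exact List.mem_append_right _ (List.mem_ofFn.2 ⟨⟨0, h⟩, rfl⟩)
    rcases Nat.eq_zero_or_pos n₁ with h₁ | h₁
    · rcases Nat.eq_zero_or_pos n₃ with h₃ | h₃
      · have h₂ : 0 < n₂ := by omega
        have h₄ : 0 < n₄ := by omega
        exact ⟨⟨_, mem2 h₂, rfl⟩, ⟨_, mem4 h₄, rfl⟩⟩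
      · exact ⟨⟨_, mem3 h₃, rfl⟩, ⟨_, mem3 h₃, rfl⟩⟩
    · exact ⟨⟨_, mem1 h₁, rfl⟩, ⟨_, mem1 h₁, rfl⟩⟩
  -- T is nonempty
  cases hTc : T with
  | nil =>
    exfalso
    rw [hTc] at hTmap
    have := congrArg List.length hTmap
    simp at this
    omega
  | cons p T' =>
    have hfoldl := MellinAux.nice_foldl T' p.1 p.2
      (hTnice p (hTc ▸ (List.mem_cons_self (a := p) (l := T'))))
      (fun q hq => hTnice q (hTc ▸ List.mem_cons_of_mem p hq))
    have hfful : T'.foldl (fun k q => k.mul q.2) p.2 = MellinAux.Kind.full := by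
      have hlo' : (T'.foldl (fun k q => k.mul q.2) p.2).lo = true := by
        rw [← List.foldl_map (f := Prod.snd) (g := MellinAux.Kind.mul), MellinAux.Kind.foldl_lo]
        obtain ⟨q, hq, hqlo⟩ := hwit.1
        rw [hTc] at hq
        rcases List.mem_cons.1 hq with hq | hq
        · rw [hq] at hqlo; rw [hqlo]; simp
        · have : (T'.map Prod.snd).any MellinAux.Kind.lo = true :=
            List.any_eq_true.2 ⟨q.2, List.mem_map_of_mem hq, hqlo⟩
          rw [this]; simp
      have hhi' : (T'.foldl (fun k q => k.mul q.2) p.2).hi = true := by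
        rw [← List.foldl_map (f := Prod.snd) (g := MellinAux.Kind.mul), MellinAux.Kind.foldl_hi]
        obtain ⟨q, hq, hqhi⟩ := hwit.2
        rw [hTc] at hq
        rcases List.mem_cons.1 hq with hq | hq
        · rw [hq] at hqhi; rw [hqhi]; simp
        · have : (T'.map Prod.snd).any MellinAux.Kind.hi = true :=
            List.any_eq_true.2 ⟨q.2, List.mem_map_of_mem hq, hqhi⟩
          rw [this]; simp
      exact MellinAux.Kind.full_of _ hlo' hhi'
    rw [hfful] at hfoldl
    have hfval : f = (T'.map Prod.fst).foldl mellinConv p.1 := by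
      rw [hf, ← hTmap, hTc]
      rfl
    intro t ht
    rw [hfval]
    exact hfoldl.2.2.1 t ht
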